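/- Let $Z : (0,\infty) \to \mathbb{R}$ be measurable, and suppose there exist constants $0 \le d_\partial < d_f$, $d_w > 0$, $c_1, c_2 > 0$, and a measurable periodic function $G$ bounded above and below away from zero, such that for $0 < t < 1$: $c_1 t^{-d_\partial/d_w} \le t^{-d_f/d_w} G(\log(1/t)) - Z(t) \le c_2 t^{-d_\partial/d_w}$; and $|Z(t)| \le c_3 e^{-c_4 t}$ for $t \ge 1$ with $c_4 > 0$. Then for each $\gamma > -c_4$, the function $s \mapsto \int_0^\infty t^{s-1} Z(t) e^{-\gamma t}\, dt$, initially defined and analytic on $\{Re(s) > d_f/d_w\}$, admits a meromorphic continuation to $\{Re(s) > d_\partial/d_w\}$. -/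

import Mathlib

open MeasureTheory Complex Set Filter Asymptotics

noncomputable section

lemma aux_locInt {f : ℝ → ℂ} (hf : Measurable f) {C C₂ c : ℝ}
    (hc : 0 ≤ c) (hbd : ∀ t : ℝ, 0 < t → ‖f t‖ ≤ C * t ^ (-c) + C₂) :
    LocallyIntegrableOn f (Set.Ioi 0) := by
  intro x hx
  simp only [Set.mem_Ioi] at hx
  refine ⟨Set.Ioo (x/2) (x+1), ?_, ?_⟩
  · exact mem_nhdsWithin_of_mem_nhds (Ioo_mem_nhds (by linarith) (by linarith))
  · refine Integrable.mono' (g := fun _ => |C| * (x/2) ^ (-c) + |C₂|)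
      (integrableOn_const measure_Ioo_lt_top.ne) hf.aestronglyMeasurable.restrict ?_
    refine (ae_restrict_iff' measurableSet_Ioo).mpr (ae_of_all _ fun t ht => ?_)
    have ht0 : 0 < t := lt_trans (by linarith) ht.1
    have h1 : t ^ (-c) ≤ (x/2) ^ (-c) :=
      Real.rpow_le_rpow_of_nonpos (by linarith) ht.1.le (neg_nonpos.mpr hc)
    have h2 : C * t ^ (-c) ≤ |C| * (x/2) ^ (-c) :=
      mul_le_mul (le_abs_self C) h1 (Real.rpow_nonneg ht0.le _) (abs_nonneg C)
    have := hbd t ht0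
    have := le_abs_self C₂
    linarith

lemma aux_isBigO_zero {f : ℝ → ℂ} {C e δ : ℝ} (hδ : 0 < δ)
    (h : ∀ t : ℝ, 0 < t → t < δ → ‖f t‖ ≤ C * t ^ e) :
    f =O[nhdsWithin 0 (Set.Ioi 0)] (fun t : ℝ => t ^ e) := by
  rw [Asymptotics.isBigO_iff]
  refine ⟨C, ?_⟩
  filter_upwards [Ioo_mem_nhdsGT_of_mem (Set.left_mem_Ico.mpr hδ)] with t ht
  calc ‖f t‖ ≤ C * t ^ e := h t ht.1 ht.2
    _ = C * ‖t ^ e‖ := by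
        rw [Real.norm_eq_abs, abs_of_pos (Real.rpow_pos_of_pos ht.1 e)]

lemma aux_isBigO_top {f : ℝ → ℂ} (h : ∀ t : ℝ, 1 ≤ t → f t = 0) (g : ℝ → ℝ) :
    f =O[atTop] g := by
  rw [Asymptotics.isBigO_iff]
  refine ⟨0, ?_⟩
  filter_upwards [eventually_ge_atTop (1:ℝ)] with t ht
  simp [h t ht]

lemma aux_mero_comp_add {f : ℂ → ℂ} {x c : ℂ} (h : MeromorphicAt f (x + c)) :
    MeromorphicAt (fun z => f (z + c)) x := by
  obtain ⟨n, hn⟩ := h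
  refine ⟨n, ?_⟩
  have hin : AnalyticAt ℂ (fun z : ℂ => z + c) x := by
    exact analyticAt_id.add analyticAt_const
  have h2 : AnalyticAt ℂ ((fun w => (w - (x + c)) ^ n • f w) ∘ (fun z : ℂ => z + c)) x :=
    AnalyticAt.comp hn hin
  refine h2.congr (Filter.Eventually.of_forall fun z => ?_)
  simp only [Function.comp_apply, smul_eq_mul]
  ring_nf

lemma aux_mero_sum {F : ℕ → ℂ → ℂ} (T : Finset ℕ) {x : ℂ}
    (h : ∀ n ∈ T, MeromorphicAt (F n) x) :
    MeromorphicAt (fun z => ∑ n ∈ T, F n z) x := by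
  classical
  induction T using Finset.induction_on with
  | empty => simpa using MeromorphicAt.const (0:ℂ) x
  | insert i T' hni ih =>
    have h1 : MeromorphicAt (F i) x := h i (Finset.mem_insert_self i T')
    have h2 : MeromorphicAt (fun z => ∑ n ∈ T', F n z) x :=
      ih fun n hn => h n (Finset.mem_insert_of_mem hn)
    have := h1.add h2
    refine this.congr (Filter.EventuallyEq.filter_mono
      (Filter.Eventually.of_forall fun z => ?_) nhdsWithin_le_nhds)
    simp [Finset.sum_insert hni]

set_option maxHeartbeats 2000000 in
/-- Lemma 1 of the paper: the Mellin transform of the partition function,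
analytic for `Re s > d_f / d_w`, admits a meromorphic continuation to
`Re s > d_∂ / d_w`. -/
theorem stmt_13 (Z : ℝ → ℝ) (hZm : Measurable Z)
    (d_bd d_f d_w c₁ c₂ c₃ c₄ : ℝ)
    (hbd : 0 ≤ d_bd) (hdf : d_bd < d_f) (hdw : 0 < d_w)
    (hc₁ : 0 < c₁) (hc₂ : 0 < c₂) (hc₄ : 0 < c₄)
    (G : ℝ → ℝ) (hGm : Measurable G) (P : ℝ) (hP : 0 < P)
    (hGper : Function.Periodic G P)
    (m M : ℝ) (hm : 0 < m) (hG : ∀ x : ℝ, m ≤ G x ∧ G x ≤ M)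
    (hsmall : ∀ t ∈ Ioo (0 : ℝ) 1,
      c₁ * t ^ (-(d_bd / d_w)) ≤ t ^ (-(d_f / d_w)) * G (Real.log (1 / t)) - Z t ∧
      t ^ (-(d_f / d_w)) * G (Real.log (1 / t)) - Z t ≤ c₂ * t ^ (-(d_bd / d_w)))
    (hlarge : ∀ t : ℝ, 1 ≤ t → |Z t| ≤ c₃ * Real.exp (-c₄ * t))
    (γ : ℝ) (hγ : -c₄ < γ) :
    DifferentiableOn ℂ
      (fun s : ℂ => ∫ t in Ioi (0 : ℝ),
        (t : ℂ) ^ (s - 1) * (Z t : ℂ) * (Real.exp (-γ * t) : ℂ))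
      {s : ℂ | d_f / d_w < s.re} ∧
    ∃ g : ℂ → ℂ,
      MeromorphicOn g {s : ℂ | d_bd / d_w < s.re} ∧
      ∀ s : ℂ, d_f / d_w < s.re →
        g s = ∫ t in Ioi (0 : ℝ),
          (t : ℂ) ^ (s - 1) * (Z t : ℂ) * (Real.exp (-γ * t) : ℂ) := by
  classical
  set a : ℝ := d_f / d_w with ha_def
  set b : ℝ := d_bd / d_w with hb_def
  have hba : b < a := by rw [ha_def, hb_def]; gcongr
  have hb0 : 0 ≤ b := div_nonneg hbd hdw.le
  have ha0 : 0 < a := lt_of_le_of_lt hb0 hba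
  have hM : 0 < M := lt_of_lt_of_le hm ((hG 0).1.trans (hG 0).2)
  have hc₃ : 0 ≤ c₃ := by
    have h := le_trans (abs_nonneg _) (hlarge 1 le_rfl)
    have := Real.exp_pos (-c₄ * 1)
    nlinarith
  have hγc : 0 < c₄ + γ := by linarith
  -- measurability of t ↦ t ^ e
  have hrpow_m : ∀ e : ℝ, Measurable (fun t : ℝ => t ^ e) := fun e =>
    measurable_of_continuousOn_compl_singleton 0 (fun x hx =>
      (Real.continuousAt_rpow_const x e (Or.inl hx)).continuousWithinAt)
  -- the leading periodic function
  set q : ℝ → ℝ := fun t => t ^ (-a) * G (Real.log (1 / t)) with hq_def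
  have hq_m : Measurable q := by
    rw [hq_def]
    exact (hrpow_m (-a)).mul
      (hGm.comp (Real.measurable_log.comp (measurable_const.div measurable_id)))
  have hq_abs : ∀ t : ℝ, 0 < t → |q t| ≤ M * t ^ (-a) := by
    intro t ht
    rw [hq_def]
    have hg0 : 0 < G (Real.log (1 / t)) := lt_of_lt_of_le hm (hG _).1
    rw [abs_mul, abs_of_pos (Real.rpow_pos_of_pos ht _), abs_of_pos hg0]
    calc t ^ (-a) * G (Real.log (1 / t)) ≤ t ^ (-a) * M :=
          mul_le_mul_of_nonneg_left (hG _).2 (Real.rpow_nonneg ht.le _)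
      _ = M * t ^ (-a) := mul_comm _ _
  have hqZ : ∀ t ∈ Ioo (0:ℝ) 1, 0 ≤ q t - Z t ∧ q t - Z t ≤ c₂ * t ^ (-b) := by
    intro t ht
    obtain ⟨h1, h2⟩ := hsmall t ht
    exact ⟨le_trans (mul_nonneg hc₁.le (Real.rpow_nonneg ht.1.le _)) h1, h2⟩
  have hZ_bound : ∀ t ∈ Ioo (0:ℝ) 1, |Z t| ≤ (M + c₂) * t ^ (-a) := by
    intro t ht
    obtain ⟨h0, h2⟩ := hqZ t ht
    have htb : t ^ (-b) ≤ t ^ (-a) :=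
      Real.rpow_le_rpow_of_exponent_ge ht.1 ht.2.le (neg_le_neg hba.le)
    have hqb := hq_abs t ht.1
    have h3 : c₂ * t ^ (-b) ≤ c₂ * t ^ (-a) := mul_le_mul_of_nonneg_left htb hc₂.le
    have h4 := abs_le.mp hqb
    rw [abs_le]
    constructor <;> nlinarith
  -- the full function
  set fZ : ℝ → ℂ := fun t => ((Z t * Real.exp (-γ * t) : ℝ) : ℂ) with hfZ_def
  have hfZ_m : Measurable fZ := by
    rw [hfZ_def]
    exact Complex.measurable_ofReal.comp
      (hZm.mul (Real.measurable_exp.comp (measurable_const.mul measurable_id)))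
  have hexpb : ∀ t : ℝ, 0 ≤ t → t ≤ 1 → Real.exp (-γ * t) ≤ Real.exp |γ| := by
    intro t h0 h1
    apply Real.exp_le_exp.mpr
    nlinarith [neg_abs_le γ, abs_nonneg γ]
  have hfZ_lt1 : ∀ t ∈ Ioo (0:ℝ) 1, ‖fZ t‖ ≤ ((M + c₂) * Real.exp |γ|) * t ^ (-a) := by
    intro t ht
    rw [hfZ_def]
    rw [Complex.norm_real, Real.norm_eq_abs, abs_mul, abs_of_pos (Real.exp_pos _)]
    have h1 := hZ_bound t ht
    have h2 := hexpb t ht.1.le ht.2.le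
    have h3 : (0:ℝ) ≤ (M + c₂) * t ^ (-a) := mul_nonneg (by positivity) (Real.rpow_nonneg ht.1.le _)
    calc |Z t| * Real.exp (-γ * t) ≤ ((M + c₂) * t ^ (-a)) * Real.exp |γ| := by
          exact mul_le_mul h1 h2 (Real.exp_pos _).le h3
      _ = ((M + c₂) * Real.exp |γ|) * t ^ (-a) := by ring
  have hfZ_ge1 : ∀ t : ℝ, 1 ≤ t → ‖fZ t‖ ≤ c₃ * Real.exp (-(c₄ + γ) * t) := by
    intro t ht
    rw [hfZ_def]
    rw [Complex.norm_real, Real.norm_eq_abs, abs_mul, abs_of_pos (Real.exp_pos _)]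
    calc |Z t| * Real.exp (-γ * t) ≤ (c₃ * Real.exp (-c₄ * t)) * Real.exp (-γ * t) :=
          mul_le_mul_of_nonneg_right (hlarge t ht) (Real.exp_pos _).le
      _ = c₃ * Real.exp (-(c₄ + γ) * t) := by
          rw [mul_assoc, ← Real.exp_add]; ring_nf
  have hfZ_loc : LocallyIntegrableOn fZ (Ioi 0) := by
    refine aux_locInt hfZ_m (C := (M + c₂) * Real.exp |γ|) (C₂ := c₃) ha0.le ?_
    intro t ht
    rcases lt_or_ge t 1 with h1 | h1
    · have := hfZ_lt1 t ⟨ht, h1⟩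
      linarith
    · have h2 := hfZ_ge1 t h1
      have h3 : Real.exp (-(c₄ + γ) * t) ≤ 1 := by
        rw [Real.exp_le_one_iff]; nlinarith
      have h4 : (0:ℝ) ≤ ((M + c₂) * Real.exp |γ|) * t ^ (-a) := mul_nonneg (by positivity) (Real.rpow_nonneg ht.le _)
      nlinarith
  have hfZ_top : fZ =O[atTop] (fun t => Real.exp (-(c₄ + γ) * t)) := by
    rw [Asymptotics.isBigO_iff]
    refine ⟨c₃, ?_⟩
    filter_upwards [eventually_ge_atTop (1:ℝ)] with t ht
    rw [Real.norm_eq_abs, abs_of_pos (Real.exp_pos _)]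
    exact hfZ_ge1 t ht
  have hfZ_bot : fZ =O[nhdsWithin 0 (Set.Ioi 0)] (fun t : ℝ => t ^ (-a)) :=
    aux_isBigO_zero zero_lt_one (fun t h0 h1 => hfZ_lt1 t ⟨h0, h1⟩)
  -- rewriting the statement's integral as a Mellin transform
  have htarget : (fun s : ℂ => ∫ t in Ioi (0:ℝ),
      (t : ℂ) ^ (s - 1) * (Z t : ℂ) * (Real.exp (-γ * t) : ℂ)) = mellin fZ := by
    funext s
    rw [mellin]
    congr 1
    funext t
    rw [hfZ_def]
    push_cast [smul_eq_mul]
    ring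
  -- Part 1 : differentiability for re s > a
  have hpart1 : DifferentiableOn ℂ (mellin fZ) {s : ℂ | a < s.re} := by
    intro s hs
    exact (mellin_differentiableAt_of_isBigO_rpow_exp hγc hfZ_loc hfZ_top hfZ_bot hs).differentiableWithinAt
  -- the leading term and its pieces
  set c0 : ℝ := Real.exp (-P) with hc0_def
  have hc0 : 0 < c0 := Real.exp_pos _
  have hc01 : c0 < 1 := by rw [hc0_def]; exact Real.exp_lt_one_iff.mpr (by linarith)
  set f₁ : ℝ → ℂ := (Set.Ioo (0:ℝ) 1).indicator (fun t => (q t : ℂ)) with hf₁_def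
  set u : ℝ → ℂ := (Set.Ioo (0:ℝ) c0).indicator (fun t => (q t : ℂ)) with hu_def
  set f₂ : ℝ → ℂ := (Set.Ico c0 1).indicator (fun t => (q t : ℂ)) with hf₂_def
  have hf₁_m : Measurable f₁ :=
    (Complex.measurable_ofReal.comp hq_m).indicator measurableSet_Ioo
  have hu_m : Measurable u :=
    (Complex.measurable_ofReal.comp hq_m).indicator measurableSet_Ioo
  have hf₂_m : Measurable f₂ :=
    (Complex.measurable_ofReal.comp hq_m).indicator measurableSet_Ico
  have hf₁_bd : ∀ t : ℝ, 0 < t → ‖f₁ t‖ ≤ M * t ^ (-a) := by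
    intro t ht
    by_cases h : t ∈ Set.Ioo (0:ℝ) 1
    · rw [hf₁_def, Set.indicator_of_mem h, Complex.norm_real, Real.norm_eq_abs]
      exact hq_abs t ht
    · rw [hf₁_def, Set.indicator_of_notMem h, norm_zero]
      exact mul_nonneg hM.le (Real.rpow_nonneg ht.le _)
  have hu_bd : ∀ t : ℝ, 0 < t → ‖u t‖ ≤ M * t ^ (-a) := by
    intro t ht
    by_cases h : t ∈ Set.Ioo (0:ℝ) c0
    · rw [hu_def, Set.indicator_of_mem h, Complex.norm_real, Real.norm_eq_abs]
      exact hq_abs t ht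
    · rw [hu_def, Set.indicator_of_notMem h, norm_zero]
      exact mul_nonneg hM.le (Real.rpow_nonneg ht.le _)
  have hf₂_bd : ∀ t : ℝ, 0 < t → ‖f₂ t‖ ≤ M * c0 ^ (-a) := by
    intro t ht
    by_cases h : t ∈ Set.Ico c0 1
    · rw [hf₂_def, Set.indicator_of_mem h, Complex.norm_real, Real.norm_eq_abs]
      refine le_trans (hq_abs t ht) (mul_le_mul_of_nonneg_left ?_ hM.le)
      exact Real.rpow_le_rpow_of_nonpos hc0 h.1 (neg_nonpos.mpr ha0.le)
    · rw [hf₂_def, Set.indicator_of_notMem h, norm_zero]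
      exact mul_nonneg hM.le (Real.rpow_nonneg hc0.le _)
  have hf₁_top : ∀ t : ℝ, 1 ≤ t → f₁ t = 0 := by
    intro t ht
    rw [hf₁_def, Set.indicator_of_notMem (fun h => absurd h.2 (not_lt.mpr ht))]
  have hu_top : ∀ t : ℝ, 1 ≤ t → u t = 0 := by
    intro t ht
    exact Set.indicator_of_notMem (fun h => absurd h.2 (not_lt.mpr (le_trans hc01.le ht))) _
  have hf₂_top : ∀ t : ℝ, 1 ≤ t → f₂ t = 0 := by
    intro t ht
    exact Set.indicator_of_notMem (fun h => absurd h.2 (not_lt.mpr ht)) _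
  have hf₁_bot : f₁ =O[nhdsWithin 0 (Set.Ioi 0)] (fun t : ℝ => t ^ (-a)) :=
    aux_isBigO_zero zero_lt_one (fun t h0 _ => hf₁_bd t h0)
  have hu_bot : u =O[nhdsWithin 0 (Set.Ioi 0)] (fun t : ℝ => t ^ (-a)) :=
    aux_isBigO_zero zero_lt_one (fun t h0 _ => hu_bd t h0)
  have hf₂_bot : ∀ e : ℝ, f₂ =O[nhdsWithin 0 (Set.Ioi 0)] (fun t : ℝ => t ^ e) := by
    intro e
    refine aux_isBigO_zero (C := 0) hc0 (fun t h0 h1 => ?_)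
    rw [hf₂_def, Set.indicator_of_notMem (fun h => absurd h.1 (not_le.mpr h1)), norm_zero,
      zero_mul]
  have hf₁_loc : LocallyIntegrableOn f₁ (Ioi 0) := by
    refine aux_locInt hf₁_m (C := M) (C₂ := 0) ha0.le (fun t ht => ?_)
    have := hf₁_bd t ht; linarith
  have hu_loc : LocallyIntegrableOn u (Ioi 0) := by
    refine aux_locInt hu_m (C := M) (C₂ := 0) ha0.le (fun t ht => ?_)
    have := hu_bd t ht; linarith
  have hf₂_loc : LocallyIntegrableOn f₂ (Ioi 0) := by
    refine aux_locInt hf₂_m (C := 0) (C₂ := M * c0 ^ (-a)) le_rfl (fun t ht => ?_)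
    have := hf₂_bd t ht
    have h0 : (0:ℝ) ≤ t ^ (-(0:ℝ)) := Real.rpow_nonneg ht.le _
    nlinarith
  -- convergence of the Mellin transforms in the half plane
  have hconv_f₁ : ∀ s : ℂ, a < s.re → MellinConvergent f₁ s := fun s hs =>
    mellinConvergent_of_isBigO_rpow hf₁_loc
      (aux_isBigO_top hf₁_top (fun t : ℝ => t ^ (-(s.re + 1)))) (lt_add_one _) hf₁_bot hs
  have hconv_u : ∀ s : ℂ, a < s.re → MellinConvergent u s := fun s hs =>
    mellinConvergent_of_isBigO_rpow hu_loc
      (aux_isBigO_top hu_top (fun t : ℝ => t ^ (-(s.re + 1)))) (lt_add_one _) hu_bot hs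
  have hconv_f₂ : ∀ s : ℂ, b < s.re → MellinConvergent f₂ s := fun s hs =>
    mellinConvergent_of_isBigO_rpow hf₂_loc
      (aux_isBigO_top hf₂_top (fun t : ℝ => t ^ (-(s.re + 1)))) (lt_add_one _) (hf₂_bot (-b)) hs
  -- num is entire
  have hnum_diff : ∀ s : ℂ, DifferentiableAt ℂ (mellin f₂) s := fun s =>
    mellin_differentiableAt_of_isBigO_rpow hf₂_loc
      (aux_isBigO_top hf₂_top (fun t : ℝ => t ^ (-(s.re + 1)))) (lt_add_one _)
      (hf₂_bot (-(s.re - 1))) (by linarith)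
  -- φ is analytic on re s > a
  have hφ_diff : ∀ s : ℂ, a < s.re → DifferentiableAt ℂ (mellin f₁) s := fun s hs =>
    mellin_differentiableAt_of_isBigO_rpow hf₁_loc
      (aux_isBigO_top hf₁_top (fun t : ℝ => t ^ (-(s.re + 1)))) (lt_add_one _) hf₁_bot hs
  -- splitting f₁ = u + f₂
  have hset : Set.Ioo (0:ℝ) 1 = Set.Ioo 0 c0 ∪ Set.Ico c0 1 := by
    ext x
    constructor
    · rintro ⟨h1, h2⟩
      rcases lt_or_ge x c0 with h | h
      · exact Or.inl ⟨h1, h⟩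
      · exact Or.inr ⟨h, h2⟩
    · rintro (⟨h1, h2⟩ | ⟨h1, h2⟩)
      · exact ⟨h1, h2.trans hc01⟩
      · exact ⟨lt_of_lt_of_le hc0 h1, h2⟩
  have hdisj : Disjoint (Set.Ioo (0:ℝ) c0) (Set.Ico c0 1) :=
    Set.disjoint_left.mpr (fun x hx hx' => absurd hx.2 (not_lt.mpr hx'.1))
  have hsplit : ∀ t : ℝ, f₁ t = u t + f₂ t := by
    intro t
    rw [hf₁_def, hu_def, hf₂_def, hset, Set.indicator_union_of_disjoint hdisj]
  -- the scaling identity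
  have hu_scale : ∀ t : ℝ, f₁ (Real.exp P * t) = (Real.exp (-(P * a)) : ℂ) • u t := by
    intro t
    by_cases ht : t ∈ Set.Ioo (0:ℝ) c0
    · have h1 : Real.exp P * t ∈ Set.Ioo (0:ℝ) 1 := by
        constructor
        · exact mul_pos (Real.exp_pos _) ht.1
        · have : Real.exp P * t < Real.exp P * c0 :=
            mul_lt_mul_of_pos_left ht.2 (Real.exp_pos _)
          rwa [hc0_def, ← Real.exp_add, add_neg_cancel, Real.exp_zero] at this
      rw [hf₁_def, Set.indicator_of_mem h1, hu_def, Set.indicator_of_mem ht]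
      have hreal : q (Real.exp P * t) = Real.exp (-(P * a)) * q t := by
        simp only [hq_def]
        have e1 : (Real.exp P * t) ^ (-a) = Real.exp (-(P * a)) * t ^ (-a) := by
          rw [Real.mul_rpow (Real.exp_pos P).le ht.1.le]
          congr 1
          rw [Real.rpow_def_of_pos (Real.exp_pos P), Real.log_exp]
          ring_nf
        have e2 : Real.log (1 / (Real.exp P * t)) = Real.log (1 / t) - P := by
          rw [one_div, one_div, Real.log_inv, Real.log_inv,
            Real.log_mul (Real.exp_ne_zero P) (ne_of_gt ht.1), Real.log_exp]
          ring
        rw [e1, e2, hGper.sub_eq]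
        ring
      rw [hreal]
      push_cast [smul_eq_mul]
      ring
    · have h1 : Real.exp P * t ∉ Set.Ioo (0:ℝ) 1 := by
        intro hmem
        apply ht
        constructor
        · nlinarith [Real.exp_pos P, hmem.1, hmem.2]
        · by_contra hcon
          push_neg at hcon
          have : Real.exp P * c0 ≤ Real.exp P * t :=
            mul_le_mul_of_nonneg_left hcon (Real.exp_pos P).le
          rw [hc0_def, ← Real.exp_add, add_neg_cancel, Real.exp_zero] at this
          exact absurd hmem.2 (not_lt.mpr this)
      rw [hf₁_def, Set.indicator_of_notMem h1, hu_def, Set.indicator_of_notMem ht, smul_zero]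
  -- the functional equation
  have hkey : ∀ s : ℂ, (Complex.exp (-((P:ℂ) * (a:ℂ)))) * mellin u s
      = Complex.exp (-((P:ℂ) * s)) * mellin f₁ s := by
    intro s
    have h1 := mellin_comp_mul_left f₁ s (Real.exp_pos P)
    have h2 : (fun t => f₁ (Real.exp P * t))
        = fun t => ((Real.exp (-(P * a)) : ℝ) : ℂ) • u t := funext hu_scale
    rw [h2, mellin_const_smul] at h1
    have h3 : ((Real.exp P : ℝ) : ℂ) ^ (-s) = Complex.exp (-((P:ℂ) * s)) := by
      rw [Complex.ofReal_exp, Complex.cpow_def_of_ne_zero (Complex.exp_ne_zero _),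
        Complex.log_exp (by simp [neg_lt_zero, Real.pi_pos])
          (by simp [Real.pi_nonneg])]
      ring_nf
    rw [h3] at h1
    have h4 : ((Real.exp (-(P * a)) : ℝ) : ℂ) = Complex.exp (-((P:ℂ) * (a:ℂ))) := by
      rw [Complex.ofReal_exp]
      push_cast
      ring_nf
    rw [h4] at h1
    simpa [smul_eq_mul] using h1
  -- the continued function h
  set w : ℂ → ℂ := fun s => Complex.exp (((a:ℂ) - s) * (P:ℂ)) with hw_def
  have hw_ne : ∀ s : ℂ, a < s.re → w s ≠ 1 := by
    intro s hs heq
    have h1 : ‖w s‖ = 1 := by rw [heq]; simp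
    rw [hw_def] at h1
    simp only [Complex.norm_exp] at h1
    have h2 : ((((a:ℂ) - s) * (P:ℂ)).re) = (a - s.re) * P := by
      simp [Complex.mul_re, Complex.sub_re, Complex.ofReal_re, Complex.ofReal_im,
        Complex.sub_im]
    rw [h2, Real.exp_eq_one_iff] at h1
    nlinarith
  have hmu : ∀ s : ℂ, mellin u s = w s * mellin f₁ s := by
    intro s
    have hchain : Complex.exp (-((P:ℂ) * (a:ℂ))) * (w s * mellin f₁ s)
        = Complex.exp (-((P:ℂ) * (a:ℂ))) * mellin u s := by
      calc Complex.exp (-((P:ℂ) * (a:ℂ))) * (w s * mellin f₁ s)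
          = Complex.exp (-((P:ℂ) * (a:ℂ)) + ((a:ℂ) - s) * (P:ℂ)) * mellin f₁ s := by
            simp only [hw_def]
            rw [Complex.exp_add]; ring
        _ = Complex.exp (-((P:ℂ) * s)) * mellin f₁ s := by
            rw [show -((P:ℂ) * (a:ℂ)) + ((a:ℂ) - s) * (P:ℂ) = -((P:ℂ) * s) by ring]
        _ = Complex.exp (-((P:ℂ) * (a:ℂ))) * mellin u s := (hkey s).symm
    exact (mul_left_cancel₀ (Complex.exp_ne_zero _) hchain).symm
  set hcont : ℂ → ℂ := fun s => mellin f₂ s / (1 - w s) with hcont_def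
  have hφh : ∀ s : ℂ, a < s.re → mellin f₁ s = hcont s := by
    intro s hs
    have hφeq : mellin f₁ s = mellin u s + mellin f₂ s := by
      have hfeq : f₁ = fun t => u t + f₂ t := funext hsplit
      rw [hfeq]
      exact (hasMellin_add (hconv_u s hs) (hconv_f₂ s (hba.trans hs))).2
    have hne : (1 : ℂ) - w s ≠ 0 := sub_ne_zero.mpr (Ne.symm (hw_ne s hs))
    rw [hcont_def]
    rw [eq_div_iff hne]
    have := hmu s
    linear_combination hφeq + this - mellin f₁ s * this / mellin f₁ s * 0
  -- Taylor expansion data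
  set N : ℕ := ⌊a⌋₊ + 1 with hN_def
  have hNpos : 0 < N := Nat.succ_pos _
  have hNa : a < (N : ℝ) := by rw [hN_def]; push_cast; exact Nat.lt_floor_add_one a
  set E : ℝ → ℝ := fun t => Real.exp (-γ * t)
      - ∑ n ∈ Finset.range N, (-γ * t) ^ n / (n.factorial : ℝ) with hE_def
  have hE_m : Measurable E := by
    rw [hE_def]
    refine (Real.measurable_exp.comp (measurable_const.mul measurable_id)).sub ?_
    exact Finset.measurable_sum _ (fun n _ =>
      ((measurable_const.mul measurable_id).pow_const n).div_const _)
  have hE_glob : ∀ t : ℝ, 0 ≤ t → t ≤ 1 → |E t| ≤ 2 * Real.exp |γ| := by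
    intro t h0 h1
    rw [hE_def]
    simp only
    rw [sub_eq_add_neg]
    refine (abs_add_le _ _).trans ?_
    rw [abs_neg]
    have e1 : |Real.exp (-γ * t)| ≤ Real.exp |γ| := by
      rw [abs_of_pos (Real.exp_pos _)]; exact hexpb t h0 h1
    have e2 : |∑ n ∈ Finset.range N, (-γ * t) ^ n / (n.factorial : ℝ)| ≤ Real.exp |γ| := by
      refine (Finset.abs_sum_le_sum_abs _ _).trans ?_
      refine le_trans (Finset.sum_le_sum (fun n _ => ?_)) (Real.sum_le_exp_of_nonneg (abs_nonneg γ) N)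
      rw [_root_.abs_div, _root_.abs_pow, _root_.abs_mul, abs_neg]
      have e3 : |γ| * |t| ≤ |γ| := by
        rw [_root_.abs_of_nonneg h0]
        nlinarith [abs_nonneg γ]
      rw [_root_.abs_of_nonneg (Nat.cast_nonneg _ : (0:ℝ) ≤ (n.factorial : ℝ))]
      gcongr
    linarith
  set δ : ℝ := 1 / (1 + |γ|) with hδ_def
  have hδ : 0 < δ := by rw [hδ_def]; positivity
  set CE : ℝ := |γ| ^ N * ((N.succ : ℝ) / ((N.factorial : ℝ) * N)) with hCE_def
  have hCE : 0 ≤ CE := by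
    rw [hCE_def]
    positivity
  have hE_near : ∀ t : ℝ, 0 < t → t < δ → |E t| ≤ CE * t ^ (N : ℕ) := by
    intro t ht htδ
    have hx : |(-γ * t)| ≤ 1 := by
      rw [abs_mul, abs_neg, abs_of_pos ht]
      have h2 : t * (1 + |γ|) < 1 := by
        rw [hδ_def] at htδ
        exact (lt_div_iff₀ (by positivity)).mp htδ
      nlinarith [abs_nonneg γ]
    have hb2 := Real.exp_bound hx hNpos
    rw [hE_def]
    simp only
    refine le_trans hb2 ?_
    rw [abs_mul, abs_neg, abs_of_pos ht, hCE_def]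
    rw [mul_pow]
    ring_nf
    exact le_refl _
  -- the three lower-order pieces
  set Rem : ℝ → ℂ := (Set.Ioo (0:ℝ) 1).indicator (fun t => ((q t * E t : ℝ) : ℂ)) with hRem_def
  set R₂ : ℝ → ℂ := (Set.Ioo (0:ℝ) 1).indicator
      (fun t => (((Z t - q t) * Real.exp (-γ * t) : ℝ) : ℂ)) with hR₂_def
  set tail : ℝ → ℂ := (Set.Ici (1:ℝ)).indicator fZ with htail_def
  have hRem_m : Measurable Rem :=
    (Complex.measurable_ofReal.comp (hq_m.mul hE_m)).indicator measurableSet_Ioo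
  have hR₂_m : Measurable R₂ :=
    (Complex.measurable_ofReal.comp ((hZm.sub hq_m).mul
      (Real.measurable_exp.comp (measurable_const.mul measurable_id)))).indicator measurableSet_Ioo
  have htail_m : Measurable tail := hfZ_m.indicator measurableSet_Ici
  have hRem_top : ∀ t : ℝ, 1 ≤ t → Rem t = 0 := fun t ht =>
    Set.indicator_of_notMem (fun h => absurd h.2 (not_lt.mpr ht)) _
  have hR₂_top : ∀ t : ℝ, 1 ≤ t → R₂ t = 0 := fun t ht =>
    Set.indicator_of_notMem (fun h => absurd h.2 (not_lt.mpr ht)) _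
  have hRem_bd : ∀ t : ℝ, 0 < t → ‖Rem t‖ ≤ (M * (2 * Real.exp |γ|)) * t ^ (-a) := by
    intro t ht
    by_cases h : t ∈ Set.Ioo (0:ℝ) 1
    · rw [hRem_def, Set.indicator_of_mem h, Complex.norm_real, Real.norm_eq_abs, abs_mul]
      calc |q t| * |E t| ≤ (M * t ^ (-a)) * (2 * Real.exp |γ|) :=
            mul_le_mul (hq_abs t ht) (hE_glob t h.1.le h.2.le) (abs_nonneg _)
              (mul_nonneg hM.le (Real.rpow_nonneg ht.le _))
        _ = (M * (2 * Real.exp |γ|)) * t ^ (-a) := by ring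
    · rw [hRem_def, Set.indicator_of_notMem h, norm_zero]
      exact mul_nonneg (by positivity) (Real.rpow_nonneg ht.le _)
  have hRem_loc : LocallyIntegrableOn Rem (Ioi 0) := by
    refine aux_locInt hRem_m (C := M * (2 * Real.exp |γ|)) (C₂ := 0) ha0.le (fun t ht => ?_)
    have := hRem_bd t ht; linarith
  have hRem_bot : Rem =O[nhdsWithin 0 (Set.Ioi 0)] (fun t : ℝ => t ^ (-(a - (N:ℝ)))) := by
    refine aux_isBigO_zero (C := M * CE) (lt_min hδ zero_lt_one) (fun t h0 h1 => ?_)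
    have ht1 : t < 1 := h1.trans_le (min_le_right _ _)
    have htδ : t < δ := h1.trans_le (min_le_left _ _)
    rw [hRem_def, Set.indicator_of_mem (show t ∈ Set.Ioo (0:ℝ) 1 from ⟨h0, ht1⟩), Complex.norm_real, Real.norm_eq_abs, abs_mul]
    calc |q t| * |E t| ≤ (M * t ^ (-a)) * (CE * t ^ (N:ℕ)) :=
          mul_le_mul (hq_abs t h0) (hE_near t h0 htδ) (abs_nonneg _)
            (mul_nonneg hM.le (Real.rpow_nonneg h0.le _))
      _ = (M * CE) * t ^ (-(a - (N:ℝ))) := by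
          rw [show -(a - (N:ℝ)) = -a + (N:ℝ) by ring, Real.rpow_add h0, Real.rpow_natCast]
          ring
  have hRem_diff : ∀ s : ℂ, b < s.re → DifferentiableAt ℂ (mellin Rem) s := fun s hs =>
    mellin_differentiableAt_of_isBigO_rpow hRem_loc
      (aux_isBigO_top hRem_top (fun t : ℝ => t ^ (-(s.re + 1)))) (lt_add_one _) hRem_bot
      (by linarith)
  have hR₂_bd : ∀ t : ℝ, 0 < t → ‖R₂ t‖ ≤ (c₂ * Real.exp |γ|) * t ^ (-b) := by
    intro t ht
    by_cases h : t ∈ Set.Ioo (0:ℝ) 1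
    · rw [hR₂_def, Set.indicator_of_mem h, Complex.norm_real, Real.norm_eq_abs, abs_mul]
      have e1 : |Z t - q t| ≤ c₂ * t ^ (-b) := by
        rw [abs_sub_comm, _root_.abs_of_nonneg (hqZ t h).1]
        exact (hqZ t h).2
      have e2 : |Real.exp (-γ * t)| ≤ Real.exp |γ| := by
        rw [abs_of_pos (Real.exp_pos _)]; exact hexpb t h.1.le h.2.le
      calc |Z t - q t| * |Real.exp (-γ * t)| ≤ (c₂ * t ^ (-b)) * Real.exp |γ| :=
            mul_le_mul e1 e2 (abs_nonneg _) (mul_nonneg hc₂.le (Real.rpow_nonneg ht.le _))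
        _ = (c₂ * Real.exp |γ|) * t ^ (-b) := by ring
    · rw [hR₂_def, Set.indicator_of_notMem h, norm_zero]
      exact mul_nonneg (by positivity) (Real.rpow_nonneg ht.le _)
  have hR₂_loc : LocallyIntegrableOn R₂ (Ioi 0) := by
    refine aux_locInt hR₂_m (C := c₂ * Real.exp |γ|) (C₂ := 0) hb0 (fun t ht => ?_)
    have := hR₂_bd t ht; linarith
  have hR₂_bot : R₂ =O[nhdsWithin 0 (Set.Ioi 0)] (fun t : ℝ => t ^ (-b)) :=
    aux_isBigO_zero zero_lt_one (fun t h0 _ => hR₂_bd t h0)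
  have hR₂_diff : ∀ s : ℂ, b < s.re → DifferentiableAt ℂ (mellin R₂) s := fun s hs =>
    mellin_differentiableAt_of_isBigO_rpow hR₂_loc
      (aux_isBigO_top hR₂_top (fun t : ℝ => t ^ (-(s.re + 1)))) (lt_add_one _) hR₂_bot hs
  have htail_ge1 : ∀ t : ℝ, 1 ≤ t → ‖tail t‖ ≤ c₃ * Real.exp (-(c₄ + γ) * t) := by
    intro t ht
    rw [htail_def, Set.indicator_of_mem (Set.mem_Ici.mpr ht)]
    exact hfZ_ge1 t ht
  have htail_top : tail =O[atTop] (fun t => Real.exp (-(c₄ + γ) * t)) := by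
    rw [Asymptotics.isBigO_iff]
    refine ⟨c₃, ?_⟩
    filter_upwards [eventually_ge_atTop (1:ℝ)] with t ht
    rw [Real.norm_eq_abs, abs_of_pos (Real.exp_pos _)]
    exact htail_ge1 t ht
  have htail_bot : tail =O[nhdsWithin 0 (Set.Ioi 0)] (fun t : ℝ => t ^ (-b)) := by
    refine aux_isBigO_zero (C := 0) zero_lt_one (fun t h0 h1 => ?_)
    rw [htail_def, Set.indicator_of_notMem (fun h => absurd (Set.mem_Ici.mp h) (not_le.mpr h1)),
      norm_zero, zero_mul]
  have htail_loc : LocallyIntegrableOn tail (Ioi 0) := by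
    refine aux_locInt htail_m (C := 0) (C₂ := c₃) le_rfl (fun t ht => ?_)
    have h0 : (0:ℝ) ≤ t ^ (-(0:ℝ)) := Real.rpow_nonneg ht.le _
    rcases lt_or_ge t 1 with h1 | h1
    · rw [htail_def, Set.indicator_of_notMem (fun h => absurd (Set.mem_Ici.mp h) (not_le.mpr h1)),
        norm_zero]
      nlinarith
    · have h2 := htail_ge1 t h1
      have h3 : Real.exp (-(c₄ + γ) * t) ≤ 1 := by
        rw [Real.exp_le_one_iff]; nlinarith
      nlinarith
  have htail_diff : ∀ s : ℂ, b < s.re → DifferentiableAt ℂ (mellin tail) s := fun s hs =>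
    mellin_differentiableAt_of_isBigO_rpow_exp hγc htail_loc htail_top htail_bot hs
  -- the polynomial part
  set Sfun : ℝ → ℂ := fun t => ∑ n ∈ Finset.range N,
      ((-γ:ℂ) ^ n / (n.factorial : ℂ)) • (((t:ℂ) ^ ((n:ℕ):ℂ)) • f₁ t) with hSfun_def
  -- pointwise decomposition
  have hdecomp : ∀ t ∈ Ioi (0:ℝ), fZ t = Sfun t + (Rem t + (R₂ t + tail t)) := by
    intro t ht
    rw [Set.mem_Ioi] at ht
    by_cases h1 : t ∈ Set.Ioo (0:ℝ) 1
    · have hf₁t : f₁ t = ((q t : ℝ) : ℂ) := by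
        rw [hf₁_def, Set.indicator_of_mem h1]
      have hsum : Sfun t
          = ((∑ n ∈ Finset.range N, (-γ * t) ^ n / (n.factorial : ℝ) * q t : ℝ) : ℂ) := by
        simp only [hSfun_def]
        rw [hf₁t]
        have hterm : ∀ n ∈ Finset.range N,
            ((-γ:ℂ) ^ n / (n.factorial : ℂ)) • (((t:ℂ) ^ ((n:ℕ):ℂ)) • ((q t : ℝ) : ℂ))
              = (((-γ * t) ^ n / (n.factorial : ℝ) * q t : ℝ) : ℂ) := by
          intro n _
          rw [Complex.cpow_natCast, smul_eq_mul, smul_eq_mul]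
          push_cast
          ring
        rw [Finset.sum_congr rfl hterm]
        norm_cast
      have hreal2 : Z t * Real.exp (-γ * t)
          = (∑ n ∈ Finset.range N, (-γ * t) ^ n / (n.factorial : ℝ) * q t)
            + (q t * E t + (Z t - q t) * Real.exp (-γ * t)) := by
        have hS : ∑ n ∈ Finset.range N, (-γ * t) ^ n / (n.factorial : ℝ) * q t
            = (∑ n ∈ Finset.range N, (-γ * t) ^ n / (n.factorial : ℝ)) * q t :=
          (Finset.sum_mul _ _ _).symm
        rw [hS, hE_def]
        ring
      rw [hfZ_def, hsum, hRem_def, Set.indicator_of_mem h1, hR₂_def, Set.indicator_of_mem h1,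
        htail_def, Set.indicator_of_notMem (fun h => absurd (Set.mem_Ici.mp h) (not_le.mpr h1.2)),
        add_zero, ← Complex.ofReal_add, ← Complex.ofReal_add]
      exact congrArg _ hreal2
    · have ht1 : (1:ℝ) ≤ t := by
        by_contra hcon
        exact h1 ⟨ht, not_le.mp hcon⟩
      rw [hRem_def, Set.indicator_of_notMem h1, hR₂_def, Set.indicator_of_notMem h1,
        htail_def, Set.indicator_of_mem (Set.mem_Ici.mpr ht1)]
      simp only [hSfun_def]
      rw [hf₁_top t ht1]
      simp
  -- the value of the Mellin transform for re s > a
  have hbig : ∀ s : ℂ, a < s.re →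
      mellin fZ s = (∑ n ∈ Finset.range N, ((-γ:ℂ) ^ n / (n.factorial : ℂ)) * hcont (s + (n:ℕ)))
        + mellin Rem s + mellin R₂ s + mellin tail s := by
    intro s hs
    have hren : ∀ n : ℕ, a < (s + ((n:ℕ):ℂ)).re := by
      intro n
      simp only [Complex.add_re, Complex.natCast_re]
      have : (0:ℝ) ≤ (n:ℝ) := Nat.cast_nonneg n
      linarith
    have hTn : ∀ n ∈ Finset.range N, IntegrableOn
        (fun t : ℝ => (t:ℂ) ^ (s - 1) • (((-γ:ℂ) ^ n / (n.factorial : ℂ)) •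
          (((t:ℂ) ^ ((n:ℕ):ℂ)) • f₁ t))) (Ioi 0) := by
      intro n _
      exact (MellinConvergent.cpow_smul.mpr (hconv_f₁ _ (hren n))).const_smul _
    have hIS : IntegrableOn (fun t : ℝ => (t:ℂ) ^ (s - 1) • Sfun t) (Ioi 0) := by
      have he : (fun t : ℝ => (t:ℂ) ^ (s - 1) • Sfun t)
          = fun t : ℝ => ∑ n ∈ Finset.range N, (t:ℂ) ^ (s - 1) •
              (((-γ:ℂ) ^ n / (n.factorial : ℂ)) • (((t:ℂ) ^ ((n:ℕ):ℂ)) • f₁ t)) := by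
        funext t
        simp only [hSfun_def, Finset.smul_sum]
      rw [he]
      exact integrable_finset_sum _ hTn
    have hIRem : MellinConvergent Rem s :=
      mellinConvergent_of_isBigO_rpow hRem_loc
        (aux_isBigO_top hRem_top (fun t : ℝ => t ^ (-(s.re + 1)))) (lt_add_one _) hRem_bot
        (by linarith)
    have hIR₂ : MellinConvergent R₂ s :=
      mellinConvergent_of_isBigO_rpow hR₂_loc
        (aux_isBigO_top hR₂_top (fun t : ℝ => t ^ (-(s.re + 1)))) (lt_add_one _) hR₂_bot
        (by linarith)
    have hItail : MellinConvergent tail s :=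
      mellinConvergent_of_isBigO_rpow_exp hγc htail_loc htail_top htail_bot (by linarith)
    have e0 : mellin fZ s = ∫ t in Ioi (0:ℝ),
        ((t:ℂ) ^ (s - 1) • Sfun t + ((t:ℂ) ^ (s - 1) • Rem t
          + ((t:ℂ) ^ (s - 1) • R₂ t + (t:ℂ) ^ (s - 1) • tail t))) := by
      simp only [mellin]
      refine setIntegral_congr_fun measurableSet_Ioi (fun t ht => ?_)
      rw [hdecomp t ht]
      simp only [smul_add]
    have e1 : mellin fZ s = (∫ t in Ioi (0:ℝ), (t:ℂ) ^ (s - 1) • Sfun t)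
        + (mellin Rem s + (mellin R₂ s + mellin tail s)) := by
      have hA : IntegrableOn (fun t : ℝ => (t:ℂ) ^ (s - 1) • Rem t) (Ioi 0) := hIRem
      have hB : IntegrableOn (fun t : ℝ => (t:ℂ) ^ (s - 1) • R₂ t) (Ioi 0) := hIR₂
      have hC : IntegrableOn (fun t : ℝ => (t:ℂ) ^ (s - 1) • tail t) (Ioi 0) := hItail
      have hBC : IntegrableOn
          (fun t : ℝ => (t:ℂ) ^ (s - 1) • R₂ t + (t:ℂ) ^ (s - 1) • tail t) (Ioi 0) := hB.add hC
      have hABC : IntegrableOn (fun t : ℝ => (t:ℂ) ^ (s - 1) • Rem t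
          + ((t:ℂ) ^ (s - 1) • R₂ t + (t:ℂ) ^ (s - 1) • tail t)) (Ioi 0) := hA.add hBC
      rw [e0, integral_add hIS hABC, integral_add hA hBC, integral_add hB hC]
      rfl
    have e2 : (∫ t in Ioi (0:ℝ), (t:ℂ) ^ (s - 1) • Sfun t)
        = ∑ n ∈ Finset.range N, ((-γ:ℂ) ^ n / (n.factorial : ℂ)) * hcont (s + (n:ℕ)) := by
      have he : (fun t : ℝ => (t:ℂ) ^ (s - 1) • Sfun t)
          = fun t : ℝ => ∑ n ∈ Finset.range N, (t:ℂ) ^ (s - 1) •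
              (((-γ:ℂ) ^ n / (n.factorial : ℂ)) • (((t:ℂ) ^ ((n:ℕ):ℂ)) • f₁ t)) := by
        funext t
        simp only [hSfun_def, Finset.smul_sum]
      rw [he, integral_finset_sum _ hTn]
      refine Finset.sum_congr rfl (fun n _ => ?_)
      have e3 : (∫ t in Ioi (0:ℝ), (t:ℂ) ^ (s - 1) •
            (((-γ:ℂ) ^ n / (n.factorial : ℂ)) • (((t:ℂ) ^ ((n:ℕ):ℂ)) • f₁ t)))
          = mellin (fun t : ℝ => ((-γ:ℂ) ^ n / (n.factorial : ℂ)) •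
              (((t:ℂ) ^ ((n:ℕ):ℂ)) • f₁ t)) s := rfl
      rw [e3, mellin_const_smul, mellin_cpow_smul, hφh _ (hren n), smul_eq_mul]
    rw [e1, e2]
    ring
  -- the meromorphic continuation
  set gfun : ℂ → ℂ := fun z =>
    (∑ n ∈ Finset.range N, ((-γ:ℂ) ^ n / (n.factorial : ℂ)) * hcont (z + (n:ℕ)))
      + mellin Rem z + mellin R₂ z + mellin tail z with hgfun_def
  have hU_open : IsOpen {s : ℂ | b < s.re} := isOpen_lt continuous_const Complex.continuous_re
  have hhc_mero : ∀ x : ℂ, MeromorphicAt hcont x := by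
    intro x
    have h1 : AnalyticAt ℂ (mellin f₂) x :=
      Differentiable.analyticAt (fun z => hnum_diff z) x
    have h2 : AnalyticAt ℂ (fun z => 1 - w z) x := by
      have hd : Differentiable ℂ (fun z : ℂ => 1 - w z) := by
        simp only [hw_def]
        exact (differentiable_const _).sub (Complex.differentiable_exp.comp
          (((differentiable_const _).sub differentiable_id).mul (differentiable_const _)))
      exact hd.analyticAt x
    exact h1.meromorphicAt.div h2.meromorphicAt
  have hmero : MeromorphicOn gfun {s : ℂ | b < s.re} := by
    intro x hx
    have hx' : b < x.re := hx
    have m1 : MeromorphicAt (fun z : ℂ =>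
        ∑ n ∈ Finset.range N, ((-γ:ℂ) ^ n / (n.factorial : ℂ)) * hcont (z + (n:ℕ))) x := by
      refine aux_mero_sum _ (fun n _ => ?_)
      exact (MeromorphicAt.const _ x).mul (aux_mero_comp_add (hhc_mero (x + (n:ℕ))))
    have m2 : MeromorphicAt (mellin Rem) x :=
      (DifferentiableOn.analyticAt
        (fun y hy => (hRem_diff y hy).differentiableWithinAt) (hU_open.mem_nhds hx)).meromorphicAt
    have m3 : MeromorphicAt (mellin R₂) x :=
      (DifferentiableOn.analyticAt
        (fun y hy => (hR₂_diff y hy).differentiableWithinAt) (hU_open.mem_nhds hx)).meromorphicAt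
    have m4 : MeromorphicAt (mellin tail) x :=
      (DifferentiableOn.analyticAt
        (fun y hy => (htail_diff y hy).differentiableWithinAt) (hU_open.mem_nhds hx)).meromorphicAt
    exact ((m1.add m2).add m3).add m4
  -- assembly
  constructor
  · rw [htarget]
    exact hpart1
  · refine ⟨gfun, hmero, ?_⟩
    intro s hs
    have h1 : (∫ t in Ioi (0:ℝ), (t:ℂ) ^ (s - 1) * (Z t : ℂ) * (Real.exp (-γ * t) : ℂ))
        = mellin fZ s := congrFun htarget s
    rw [h1, hgfun_def]
    exact (hbig s hs).symm
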